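/- arXiv:2507.13284 — 5 statements merged into one kernel-verified Lean document; each statement's English description precedes it below -/
import Mathlib

section
/- The characteristic polynomial of the (N+2)×(N+2) matrix A(u) with first row (0,1,0,...,0), second row (gh - u² - Σᵢ αᵢ²/(2i+1), 2u, 2α₁/3, ..., 2α_N/(2N+1)), and for i=1,...,N, row i+2 equal to (-2uαᵢ, 2αᵢ, 0,...,0,u,0,...,0) with u in the (i+2)-th diagonal position, is P(λ) = (u-λ)^N · [(λ-u)² - gh - Σᵢ₌₁^N 3αᵢ²/(2i+1)]. -/
open Finset

/-- The Jacobian matrix of the shallow water linearized moment equations with `N` moments.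
Moment coefficients are `α 1, …, α N`. -/
noncomputable def swlmeJacobian (N : ℕ) (g h u : ℝ) (α : ℕ → ℝ) :
    Matrix (Fin (N + 2)) (Fin (N + 2)) ℝ :=
  Matrix.of fun i j =>
    if i.val = 0 then (if j.val = 1 then 1 else 0)
    else if i.val = 1 then
      if j.val = 0 then
        g * h - u ^ 2 - ∑ k ∈ Finset.range N, (α (k + 1)) ^ 2 / (2 * (k : ℝ) + 3)
      else if j.val = 1 then 2 * u
      else 2 * α (j.val - 1) / (2 * ((j.val : ℝ) - 1) + 1)
    else
      if j.val = 0 then -2 * u * α (i.val - 1)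
      else if j.val = 1 then 2 * α (i.val - 1)
      else if j = i then u else 0

/-- The characteristic polynomial of the SWLME Jacobian is
`P(λ) = (u - λ)^N ((λ - u)² - gh - Σᵢ 3αᵢ²/(2i+1))`. -/
theorem swlme_charpoly (N : ℕ) (hN : 1 ≤ N) (g h u : ℝ) (α : ℕ → ℝ) (lam : ℝ) :
    (swlmeJacobian N g h u α - lam • (1 : Matrix (Fin (N + 2)) (Fin (N + 2)) ℝ)).det =
      (u - lam) ^ N *
        ((lam - u) ^ 2 - g * h -
          ∑ k ∈ Finset.range N, 3 * (α (k + 1)) ^ 2 / (2 * (k : ℝ) + 3)) := by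
  by_cases hlu : lam = u
  · subst hlu
    have h20 : (⟨2, by omega⟩ : Fin (N + 2)) ≠ 0 := by
      simp [Fin.ext_iff]
    set M := swlmeJacobian N g h lam α - lam • (1 : Matrix (Fin (N + 2)) (Fin (N + 2)) ℝ) with hM
    have key := Matrix.det_updateRow_add_smul_self M h20 (-(2 * α 1))
    rw [← key]
    have hzero : ∀ j, (M.updateRow ⟨2, by omega⟩
        (M ⟨2, by omega⟩ + (-(2 * α 1)) • M 0)) ⟨2, by omega⟩ j = 0 := by
      intro j
      rw [Matrix.updateRow_self]
      simp only [hM, swlmeJacobian, Matrix.sub_apply, Matrix.smul_apply, Matrix.one_apply,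
        Matrix.of_apply, Pi.add_apply, Pi.smul_apply, smul_eq_mul]
      rcases j with ⟨jv, hj⟩
      simp only [Fin.ext_iff, Fin.val_zero]
      by_cases hj0 : jv = 0
      · subst hj0; norm_num; ring
      · by_cases hj1 : jv = 1
        · subst hj1; norm_num
        · by_cases hj2 : jv = 2
          · subst hj2; norm_num
          · simp only [hj0, hj1, if_false]
            have : ¬ ((2 : ℕ) = jv) := by omega
            have h0j : ¬ ((0 : ℕ) = jv) := by omega
            simp [this, h0j, hj2]
    rw [Matrix.det_eq_zero_of_row_eq_zero _ hzero]
    rw [sub_self, zero_pow (by omega : N ≠ 0), zero_mul]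
  · have hs : u - lam ≠ 0 := sub_ne_zero.mpr (fun hh => hlu hh.symm)
    set s := u - lam with hsdef
    have hcancel : ∀ x : ℝ, s * (s⁻¹ * x) = x := fun x => by
      rw [← mul_assoc, mul_inv_cancel₀ hs, one_mul]
    set c0 : ℝ := g * h - u ^ 2 - ∑ k ∈ Finset.range N, (α (k + 1)) ^ 2 / (2 * (k : ℝ) + 3)
      with hc0
    set U : Matrix (Fin (N + 2)) (Fin 2) ℝ := Matrix.of fun i a =>
      if a = 0 then (if i.val = 0 then 1 else if i.val = 1 then 0 else 2 * α (i.val - 1))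
      else (if i.val = 1 then 1 else 0) with hU
    set V : Matrix (Fin 2) (Fin (N + 2)) ℝ := Matrix.of fun a j =>
      s⁻¹ * (if a = 0 then (if j.val = 0 then -u else if j.val = 1 then 1 else 0)
        else (if j.val = 0 then c0 else if j.val = 1 then u
          else 2 * α (j.val - 1) / (2 * ((j.val : ℝ) - 1) + 1))) with hV
    have key : swlmeJacobian N g h u α - lam • (1 : Matrix (Fin (N + 2)) (Fin (N + 2)) ℝ)
        = s • (1 + U * V) := by
      ext i j
      simp only [Matrix.sub_apply, Matrix.smul_apply, Matrix.add_apply, Matrix.mul_apply,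
        Fin.sum_univ_two, Matrix.one_apply, swlmeJacobian, hU, hV, Matrix.of_apply,
        smul_eq_mul]
      rcases i with ⟨iv, hi⟩
      rcases j with ⟨jv, hj⟩
      simp only [Fin.ext_iff, Fin.mk.injEq]
      by_cases hi0 : iv = 0
      · subst hi0
        by_cases hj0 : jv = 0
        · subst hj0; norm_num; field_simp; ring
        · by_cases hj1 : jv = 1
          · subst hj1; norm_num
            exact (mul_inv_cancel₀ hs).symm
          · simp only [hj0, hj1, if_false, if_true, eq_comm (a := (0:ℕ))]
            norm_num [hj0, hj1, Ne.symm hj0]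
      · by_cases hi1 : iv = 1
        · subst hi1
          by_cases hj0 : jv = 0
          · subst hj0; norm_num [hc0]
            exact (hcancel _).symm
          · by_cases hj1 : jv = 1
            · subst hj1; norm_num; field_simp; ring
            · norm_num [hj0, hj1, Ne.symm hj0, Ne.symm hj1]
              exact (hcancel _).symm
        · by_cases hj0 : jv = 0
          · subst hj0; norm_num [hi0, hi1, Ne.symm hi0]; field_simp
          · by_cases hj1 : jv = 1
            · subst hj1; norm_num [hi0, hi1, Ne.symm hi1]; field_simp
            · by_cases hij : jv = iv
              · subst hij
                norm_num [hi0, hi1, hj0, hj1]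
                exact hsdef.symm
              · norm_num [hi0, hi1, hj0, hj1, hij, Ne.symm hij]
    rw [key, Matrix.det_smul, Matrix.det_one_add_mul_comm]
    have e00 : (V * U) 0 0 = s⁻¹ * -u := by
      rw [Matrix.mul_apply, Fin.sum_univ_succ, Fin.sum_univ_succ]
      simp [hU, hV, Fin.val_succ]
    have e01 : (V * U) 0 1 = s⁻¹ := by
      rw [Matrix.mul_apply, Fin.sum_univ_succ, Fin.sum_univ_succ]
      simp [hU, hV, Fin.val_succ]
    have e11 : (V * U) 1 1 = s⁻¹ * u := by
      rw [Matrix.mul_apply, Fin.sum_univ_succ, Fin.sum_univ_succ]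
      simp [hU, hV, Fin.val_succ]
    have e10 : (V * U) 1 0
        = s⁻¹ * (c0 + ∑ k ∈ Finset.range N, 4 * (α (k + 1)) ^ 2 / (2 * (k : ℝ) + 3)) := by
      rw [Matrix.mul_apply, Fin.sum_univ_succ, Fin.sum_univ_succ]
      have htail : ∀ k : Fin N, V 1 k.succ.succ * U k.succ.succ 0
          = s⁻¹ * (4 * (α (k.val + 1)) ^ 2 / (2 * (k.val : ℝ) + 3)) := by
        intro k
        simp only [hU, hV, Matrix.of_apply, Fin.val_succ]
        norm_num
        ring
      simp only [htail]
      rw [Fin.sum_univ_eq_sum_range (fun k => s⁻¹ * (4 * (α (k + 1)) ^ 2 / (2 * (k : ℝ) + 3))) N]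
      simp only [hU, hV, Matrix.of_apply]
      norm_num
      rw [← Finset.mul_sum]
      ring
    rw [Matrix.det_fin_two]
    simp only [Matrix.add_apply, Matrix.one_apply, e00, e01, e10, e11]
    norm_num
    have hsum : ∑ k ∈ Finset.range N, 3 * (α (k + 1)) ^ 2 / (2 * (k : ℝ) + 3)
        = (∑ k ∈ Finset.range N, 4 * (α (k + 1)) ^ 2 / (2 * (k : ℝ) + 3))
          - ∑ k ∈ Finset.range N, (α (k + 1)) ^ 2 / (2 * (k : ℝ) + 3) := by
      rw [← Finset.sum_sub_distrib]
      exact Finset.sum_congr rfl fun k _ => by ring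
    rw [hsum, hc0, hsdef]
    have hs2 : u - lam ≠ 0 := sub_ne_zero.mpr (fun hh => hlu hh.symm)
    field_simp
    ring
end

section
/- If h > 0 and g > 0, the matrix A(u) of the shallow water linearized moment equations has N+2 real eigenvalues: λ₁ = u + √(gh + Σᵢ₌₁^N 3αᵢ²/(2i+1)), λ₂ = u - √(gh + Σᵢ₌₁^N 3αᵢ²/(2i+1)), and λ = u with multiplicity N; in particular λ₁ > u > λ₂, so the system is hyperbolic with distinct extremal eigenvalues. -/
open Finset Polynomial

namespace SWLMEAux

/-- charpoly is invariant under conjugation by a pair of mutually inverse matrices. -/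
lemma charpoly_conj {n : Type*} [DecidableEq n] [Fintype n] {R : Type*} [CommRing R]
    (E A F : Matrix n n R) (hEF : E * F = 1) :
    (E * A * F).charpoly = A.charpoly := by
  have hmap : ∀ M M' : Matrix n n R, (M * M').map (C : R →+* R[X]) =
      M.map C * M'.map C := fun M M' => Matrix.map_mul
  have hone : (1 : Matrix n n R).map (C : R →+* R[X]) = 1 := by
    ext i j
    by_cases hij : i = j <;> simp [hij, Matrix.one_apply]
  have key : (E * A * F).charmatrix = E.map C * A.charmatrix * F.map C := by
    rw [Matrix.charmatrix, Matrix.charmatrix]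
    have : (Matrix.scalar n (X : R[X])) = (X : R[X]) • (1 : Matrix n n R[X]) := by
      simp [Matrix.scalar_apply, Matrix.smul_one_eq_diagonal]
    rw [RingHom.mapMatrix_apply, RingHom.mapMatrix_apply, this,
      Matrix.mul_sub, Matrix.sub_mul, Matrix.mul_smul, Matrix.mul_one, Matrix.smul_mul,
      ← hone, ← hmap, hEF, hmap, hmap]
  have hdet : (E.map (C : R →+* R[X])).det * (F.map (C : R →+* R[X])).det = 1 := by
    rw [← Matrix.det_mul, ← hmap, hEF, hone, Matrix.det_one]
  rw [Matrix.charpoly, key, Matrix.det_mul, Matrix.det_mul, Matrix.charpoly]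
  calc (E.map C).det * A.charmatrix.det * (F.map C).det
      = (E.map C).det * (F.map C).det * A.charmatrix.det := by ring
    _ = A.charmatrix.det := by rw [hdet, one_mul]

/-- The nilpotent part used in the conjugation. -/
def Pm (N : ℕ) (α : ℕ → ℝ) (c : ℝ) : Matrix (Fin (N + 2)) (Fin (N + 2)) ℝ :=
  Matrix.of fun i j => if j.val = 0 ∧ 2 ≤ i.val then c * α (i.val - 1) else 0

lemma Pm_mul_Pm (N : ℕ) (α : ℕ → ℝ) (c d : ℝ) : Pm N α c * Pm N α d = 0 := by
  ext i j
  rw [Matrix.mul_apply]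
  apply Finset.sum_eq_zero
  intro k _
  simp only [Pm, Matrix.of_apply, Matrix.zero_apply]
  split_ifs with h1 h2 h2 <;> first
    | rfl
    | (exfalso; omega)
    | simp

lemma EF_inv (N : ℕ) (α : ℕ → ℝ) :
    (1 + Pm N α (-2)) * (1 + Pm N α 2) = 1 := by
  have h1 : Pm N α (-2) + Pm N α 2 = 0 := by
    ext i j
    simp only [Pm, Matrix.add_apply, Matrix.of_apply, Matrix.zero_apply]
    split_ifs <;> ring
  have h2 := Pm_mul_Pm N α (-2) 2
  calc (1 + Pm N α (-2)) * (1 + Pm N α 2)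
      = 1 + (Pm N α (-2) + Pm N α 2) + Pm N α (-2) * Pm N α 2 := by noncomm_ring
    _ = 1 := by rw [h1, h2, add_zero, add_zero]

/-- The intermediate matrix `E * A`. -/
noncomputable def A1 (N : ℕ) (g h u : ℝ) (α : ℕ → ℝ) :
    Matrix (Fin (N + 2)) (Fin (N + 2)) ℝ :=
  Matrix.of fun i j =>
    if i.val ≤ 1 then swlmeJacobian N g h u α i j
    else if j.val = 0 then -2 * u * α (i.val - 1)
    else if j = i then u else 0

/-- The conjugated matrix, in explicit form. -/
noncomputable def A2 (N : ℕ) (g h u : ℝ) (α : ℕ → ℝ) :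
    Matrix (Fin (N + 2)) (Fin (N + 2)) ℝ :=
  Matrix.of fun i j =>
    if i.val = 0 then (if j.val = 1 then 1 else 0)
    else if i.val = 1 then
      if j.val = 0 then
        (g * h + ∑ k ∈ Finset.range N, 3 * (α (k + 1)) ^ 2 / (2 * (k : ℝ) + 3)) - u ^ 2
      else if j.val = 1 then 2 * u
      else 2 * α (j.val - 1) / (2 * ((j.val : ℝ) - 1) + 1)
    else if j = i then u else 0

lemma step1 (N : ℕ) (g h u : ℝ) (α : ℕ → ℝ) :
    (1 + Pm N α (-2)) * swlmeJacobian N g h u α = A1 N g h u α := by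
  ext i j
  rw [Matrix.add_mul, Matrix.one_mul, Matrix.add_apply]
  have hP : (Pm N α (-2) * swlmeJacobian N g h u α) i j =
      if 2 ≤ i.val then (-2) * α (i.val - 1) * (if j.val = 1 then 1 else 0) else 0 := by
    rw [Matrix.mul_apply]
    rw [Finset.sum_eq_single (0 : Fin (N + 2))]
    · simp only [Pm, Matrix.of_apply, swlmeJacobian]
      simp only [Fin.val_zero]
      split_ifs <;> simp_all
    · intro k _ hk
      simp only [Pm, Matrix.of_apply]
      have : ¬ (k.val = 0 ∧ 2 ≤ i.val) := by
        rintro ⟨h0, -⟩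
        exact hk (Fin.ext h0)
      rw [if_neg this, zero_mul]
    · intro habs; exact absurd (Finset.mem_univ _) habs
  rw [hP]
  simp only [A1, swlmeJacobian, Matrix.of_apply]
  by_cases hi0 : i.val = 0
  · simp [hi0]
  · by_cases hi1 : i.val = 1
    · simp [hi0, hi1]
    · have h2i : 2 ≤ i.val := by omega
      have hle : ¬ i.val ≤ 1 := by omega
      rw [if_neg hi0, if_neg hi1, if_pos h2i, if_neg hle]
      by_cases hj0 : j.val = 0
      · simp [hj0]
      · by_cases hj1 : j.val = 1
        · have : ¬ j = i := by
            intro hji; rw [hji] at hj1; omega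
          simp [hj0, hj1, this]
          try ring
        · simp [hj0, hj1]

lemma step2 (N : ℕ) (g h u : ℝ) (α : ℕ → ℝ) :
    A1 N g h u α * (1 + Pm N α 2) = A2 N g h u α := by
  ext i j
  rw [Matrix.mul_add, Matrix.mul_one, Matrix.add_apply]
  have hP : (A1 N g h u α * Pm N α 2) i j =
      if j.val = 0 then
        ∑ k : Fin (N + 2), (if 2 ≤ k.val then A1 N g h u α i k * (2 * α (k.val - 1)) else 0)
      else 0 := by
    rw [Matrix.mul_apply]
    by_cases hj : j.val = 0
    · rw [if_pos hj]
      apply Finset.sum_congr rfl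
      intro k _
      simp only [Pm, Matrix.of_apply, hj, true_and]
      split_ifs with hk
      · rfl
      · rw [mul_zero]
    · rw [if_neg hj]
      apply Finset.sum_eq_zero
      intro k _
      simp only [Pm, Matrix.of_apply]
      rw [if_neg (by tauto), mul_zero]
  rw [hP]
  by_cases hj : j.val = 0
  · rw [if_pos hj]
    by_cases hi0 : i.val = 0
    · have hsum : ∑ k : Fin (N + 2),
          (if 2 ≤ k.val then A1 N g h u α i k * (2 * α (k.val - 1)) else 0) = 0 := by
        apply Finset.sum_eq_zero
        intro k _
        split_ifs with hk
        · have : A1 N g h u α i k = 0 := by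
            simp only [A1, swlmeJacobian, Matrix.of_apply]
            rw [if_pos (by omega), if_pos hi0, if_neg (by omega)]
          rw [this, zero_mul]
        · rfl
      rw [hsum]
      simp [A1, A2, swlmeJacobian, hi0, hj, (by simpa using hi0 : i = 0)]
    · by_cases hi1 : i.val = 1
      · have hsum : ∑ k : Fin (N + 2),
            (if 2 ≤ k.val then A1 N g h u α i k * (2 * α (k.val - 1)) else 0) =
            ∑ m ∈ Finset.range N, 4 * (α (m + 1)) ^ 2 / (2 * (m : ℝ) + 3) := by
          rw [Fin.sum_univ_succ, Fin.sum_univ_succ]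
          rw [if_neg (by simp), if_neg (by simp [Fin.val_succ]), zero_add, zero_add]
          rw [← Fin.sum_univ_eq_sum_range (fun m => 4 * (α (m + 1)) ^ 2 / (2 * (m : ℝ) + 3)) N]
          apply Finset.sum_congr rfl
          intro m _
          have hv : ((m.succ.succ : Fin (N + 2))).val = m.val + 2 := by
            simp [Fin.val_succ]
          rw [if_pos (by omega)]
          simp only [A1, swlmeJacobian, Matrix.of_apply, hv]
          rw [if_pos (show i.val ≤ 1 by omega), if_neg hi0, if_pos hi1,
            if_neg (show ¬ m.val + 2 = 0 by omega), if_neg (show ¬ m.val + 2 = 1 by omega)]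
          have e1 : (m.val + 2) - 1 = m.val + 1 := by omega
          have e2 : (((m.val + 2 : ℕ)) : ℝ) - 1 = (m.val : ℝ) + 1 := by push_cast; ring
          rw [e1, e2]
          have hne : (2 * (m.val : ℝ) + 3) ≠ 0 := by positivity
          field_simp
          ring
        rw [hsum]
        simp only [A1, A2, swlmeJacobian, Matrix.of_apply]
        rw [if_pos (by omega : i.val ≤ 1), if_neg hi0, if_pos hi1, if_pos hj,
          if_neg hi0, if_pos hi1, if_pos hj]
        have hcomb : ∑ k ∈ Finset.range N, 3 * (α (k + 1)) ^ 2 / (2 * (k : ℝ) + 3) =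
            ∑ k ∈ Finset.range N, 4 * (α (k + 1)) ^ 2 / (2 * (k : ℝ) + 3) -
            ∑ k ∈ Finset.range N, (α (k + 1)) ^ 2 / (2 * (k : ℝ) + 3) := by
          rw [← Finset.sum_sub_distrib]
          apply Finset.sum_congr rfl
          intro k _
          ring
        rw [hcomb]
        ring
      · have h2i : 2 ≤ i.val := by omega
        have hsum : ∑ k : Fin (N + 2),
            (if 2 ≤ k.val then A1 N g h u α i k * (2 * α (k.val - 1)) else 0) =
            2 * u * α (i.val - 1) := by
          rw [Finset.sum_eq_single i]
          · rw [if_pos h2i]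
            simp only [A1, Matrix.of_apply]
            rw [if_neg (by omega), if_neg (by omega)]
            split_ifs with hii
            · ring
            · first
              | exact absurd rfl hii
              | exact absurd trivial hii
          · intro k _ hk
            split_ifs with h2k
            · simp only [A1, Matrix.of_apply]
              rw [if_neg (by omega), if_neg (by omega), if_neg hk, zero_mul]
            · rfl
          · intro habs; exact absurd (Finset.mem_univ _) habs
        rw [hsum]
        simp only [A1, A2, Matrix.of_apply]
        rw [if_neg (by omega), if_pos hj, if_neg hi0, if_neg hi1]
        rw [if_neg (show ¬ j = i by intro hji; rw [hji] at hj; omega)]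
        ring
  · rw [if_neg hj, add_zero]
    simp only [A1, A2, swlmeJacobian, Matrix.of_apply]
    by_cases hi0 : i.val = 0
    · rw [if_pos (by omega), if_pos hi0, if_pos hi0]
    · by_cases hi1 : i.val = 1
      · rw [if_pos (by omega), if_neg hi0, if_pos hi1, if_neg hi0, if_pos hi1, if_neg hj,
          if_neg hj]
      · rw [if_neg (by omega), if_neg hi0, if_neg hi1, if_neg hj]

/-- The equivalence between `Fin 2 ⊕ Fin N` and `Fin (N + 2)`. -/
def emb (N : ℕ) : Fin 2 ⊕ Fin N ≃ Fin (N + 2) where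
  toFun x := Sum.elim (fun i => (⟨i.val, by omega⟩ : Fin (N + 2)))
    (fun k => (⟨k.val + 2, by omega⟩ : Fin (N + 2))) x
  invFun i := if h : i.val < 2 then Sum.inl ⟨i.val, h⟩ else Sum.inr ⟨i.val - 2, by omega⟩
  left_inv := by
    rintro (i | k)
    · simp [i.isLt]
    · simp
  right_inv := by
    intro i
    by_cases h : i.val < 2
    · simp [h]
    · simp only [h, dite_false, Sum.elim_inr]
      exact Fin.ext (by simp; omega)

/-- The block matrix. -/
noncomputable def B2 (N : ℕ) (g h u : ℝ) (α : ℕ → ℝ) :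
    Matrix (Fin 2 ⊕ Fin N) (Fin 2 ⊕ Fin N) ℝ :=
  Matrix.fromBlocks
    !![0, 1; (g * h + ∑ k ∈ Finset.range N, 3 * (α (k + 1)) ^ 2 / (2 * (k : ℝ) + 3)) - u ^ 2, 2 * u]
    (Matrix.of fun i k => if i = 1 then 2 * α (k.val + 1) / (2 * (k.val : ℝ) + 3) else 0)
    0
    (Matrix.diagonal fun _ => u)

lemma emb_symm_inl (N : ℕ) (i : Fin (N + 2)) (i2 : Fin 2)
    (hsi : (emb N).symm i = Sum.inl i2) : i.val = i2.val := by
  simp only [emb, Equiv.coe_fn_symm_mk] at hsi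
  split_ifs at hsi with hlt
  exact congrArg Fin.val (Sum.inl.inj hsi)

lemma emb_symm_inr (N : ℕ) (i : Fin (N + 2)) (iN : Fin N)
    (hsi : (emb N).symm i = Sum.inr iN) : i.val = iN.val + 2 := by
  simp only [emb, Equiv.coe_fn_symm_mk] at hsi
  split_ifs at hsi with hlt
  have h2 := congrArg Fin.val (Sum.inr.inj hsi)
  simp only at h2
  omega

lemma step3 (N : ℕ) (g h u : ℝ) (α : ℕ → ℝ) :
    A2 N g h u α = Matrix.reindex (emb N) (emb N) (B2 N g h u α) := by
  ext i j
  rw [Matrix.reindex_apply, Matrix.submatrix_apply]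
  rcases hsi : (emb N).symm i with i2 | iN <;> rcases hsj : (emb N).symm j with j2 | jN
  -- inl inl
  · have hiv := emb_symm_inl N i i2 hsi
    have hjv := emb_symm_inl N j j2 hsj
    fin_cases i2 <;> fin_cases j2 <;>
      simp_all [A2, B2, Matrix.fromBlocks_apply₁₁, - Fin.val_eq_zero_iff]
  -- inl inr
  · have hiv := emb_symm_inl N i i2 hsi
    have hjv := emb_symm_inr N j jN hsj
    simp only [B2, Matrix.fromBlocks_apply₁₂, Matrix.of_apply]
    fin_cases i2
    · have hi0 : i.val = 0 := by simpa using hiv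
      simp only [A2, Matrix.of_apply]
      rw [if_pos hi0, if_neg (by omega)]
      split_ifs with h0
      · exact absurd h0 (by decide)
      · rfl
    · have hi1 : i.val = 1 := by simpa using hiv
      simp only [A2, Matrix.of_apply]
      rw [if_neg (by omega), if_pos hi1, if_neg (by omega), if_neg (by omega)]
      split_ifs with h0
      · have h1 : j.val - 1 = jN.val + 1 := by omega
        have h2 : ((j.val : ℕ) : ℝ) - 1 = (jN.val : ℝ) + 1 := by
          rw [hjv]; push_cast; ring
        rw [h1, h2]
        ring_nf
      · exact absurd (by decide) h0
  -- inr inl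
  · have hiv := emb_symm_inr N i iN hsi
    have hjv := emb_symm_inl N j j2 hsj
    have hj2 : j.val < 2 := by have := j2.isLt; omega
    simp only [A2, B2, Matrix.of_apply, Matrix.fromBlocks_apply₂₁, Matrix.zero_apply]
    rw [if_neg (by omega), if_neg (by omega)]
    rw [if_neg (show ¬ j = i by intro hji; rw [hji] at hj2; omega)]
  -- inr inr
  · have hiv := emb_symm_inr N i iN hsi
    have hjv := emb_symm_inr N j jN hsj
    simp only [A2, B2, Matrix.of_apply, Matrix.fromBlocks_apply₂₂]
    rw [if_neg (by omega), if_neg (by omega)]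
    rw [Matrix.diagonal_apply]
    by_cases hij : j = i
    · rw [if_pos hij]
      have : iN = jN := by
        apply Fin.ext
        rw [hij] at hjv
        omega
      rw [if_pos this]
    · rw [if_neg hij]
      rw [if_neg (by intro hc; apply hij; apply Fin.ext; rw [hiv, hjv, hc])]

lemma charpoly_diag (N : ℕ) (u : ℝ) :
    (Matrix.diagonal fun _ : Fin N => u).charpoly = (X - C u) ^ N := by
  have : (Matrix.diagonal fun _ : Fin N => u).charmatrix =
      Matrix.diagonal fun _ : Fin N => (X - C u : ℝ[X]) := by
    ext i j
    by_cases hij : i = j <;> simp [hij, Matrix.charmatrix_apply, Matrix.diagonal_apply]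
  rw [Matrix.charpoly, this, Matrix.det_diagonal]
  simp [Finset.prod_const, Finset.card_univ]

end SWLMEAux

/-- If `h > 0` and `g > 0`, the SWLME Jacobian has the `N + 2` real eigenvalues
`λ₁ = u + √(gh + Σ 3αᵢ²/(2i+1))`, `λ₂ = u - √(gh + Σ 3αᵢ²/(2i+1))` and `u` with
multiplicity `N`, and `λ₁ > u > λ₂`: the system is hyperbolic. -/
theorem swlme_hyperbolic (N : ℕ) (hN : 1 ≤ N) (g h u : ℝ) (hg : 0 < g) (hh : 0 < h)
    (α : ℕ → ℝ) :
    (swlmeJacobian N g h u α).charpoly =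
        (X - C (u + Real.sqrt (g * h + ∑ k ∈ Finset.range N,
            3 * (α (k + 1)) ^ 2 / (2 * (k : ℝ) + 3)))) *
        (X - C (u - Real.sqrt (g * h + ∑ k ∈ Finset.range N,
            3 * (α (k + 1)) ^ 2 / (2 * (k : ℝ) + 3)))) *
        (X - C u) ^ N ∧
      u + Real.sqrt (g * h + ∑ k ∈ Finset.range N,
          3 * (α (k + 1)) ^ 2 / (2 * (k : ℝ) + 3)) > u ∧
      u > u - Real.sqrt (g * h + ∑ k ∈ Finset.range N,
          3 * (α (k + 1)) ^ 2 / (2 * (k : ℝ) + 3)) := by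
  set s : ℝ := g * h + ∑ k ∈ Finset.range N, 3 * (α (k + 1)) ^ 2 / (2 * (k : ℝ) + 3) with hs
  have hspos : 0 < s := by
    have hsum : 0 ≤ ∑ k ∈ Finset.range N, 3 * (α (k + 1)) ^ 2 / (2 * (k : ℝ) + 3) := by
      apply Finset.sum_nonneg
      intro k _
      positivity
    have := mul_pos hg hh
    rw [hs]
    linarith
  have hsqrt : 0 < Real.sqrt s := Real.sqrt_pos.mpr hspos
  refine ⟨?_, by linarith, by linarith⟩
  have hconj := SWLMEAux.charpoly_conj (1 + SWLMEAux.Pm N α (-2)) (swlmeJacobian N g h u α)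
    (1 + SWLMEAux.Pm N α 2) (SWLMEAux.EF_inv N α)
  rw [SWLMEAux.step1, SWLMEAux.step2, SWLMEAux.step3] at hconj
  rw [← hconj, Matrix.charpoly_reindex]
  rw [SWLMEAux.B2, Matrix.charpoly_fromBlocks_zero₂₁, SWLMEAux.charpoly_diag]
  congr 1
  -- charpoly of the 2x2 block
  have h2x2 : (!![0, 1; s - u ^ 2, 2 * u] : Matrix (Fin 2) (Fin 2) ℝ).charpoly =
      X ^ 2 - C (2 * u) * X + C (u ^ 2 - s) := by
    rw [Matrix.charpoly, Matrix.det_fin_two]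
    simp [Matrix.charmatrix_apply, Matrix.one_apply]
    ring
  rw [h2x2]
  have hss : Real.sqrt s * Real.sqrt s = s := Real.mul_self_sqrt hspos.le
  symm
  have hmul : (u + Real.sqrt s) * (u - Real.sqrt s) = u ^ 2 - s := by nlinarith [hss]
  calc (X - C (u + Real.sqrt s)) * (X - C (u - Real.sqrt s))
      = X ^ 2 - C ((u + Real.sqrt s) + (u - Real.sqrt s)) * X
        + C ((u + Real.sqrt s) * (u - Real.sqrt s)) := by
        simp only [C_add, C_sub, C_mul]; ring
    _ = X ^ 2 - C (2 * u) * X + C (u ^ 2 - s) := by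
        rw [hmul, show (u + Real.sqrt s) + (u - Real.sqrt s) = 2 * u by ring]
end

section
/- Suppose h, u_m, α₁,...,α_N, b are smooth functions on an interval satisfying the moving water equilibrium conditions: h·u_m = constant, E := u_m²/2 + g(h+b) + (3/2)Σᵢ₌₁^N αᵢ²/(2i+1) = constant, and αᵢ/h = constant for each i. Then these functions form a steady-state solution of the SWLME, i.e., ∂ₓ f(u) + G(u)∂ₓ u = s(u,b), where f, G, s are as defined for the SWLME. -/
open Finset

/-- Moving water equilibria are steady states of the SWLME: if `h·u_m`, the energy
`E = u_m²/2 + g(h+b) + (3/2)Σᵢ αᵢ²/(2i+1)` and all ratios `αᵢ/h` are constant, then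
`∂ₓ f(u) + G(u) ∂ₓ u = s(u, b)` holds componentwise. -/
theorem swlme_moving_water_steady_state
    (N : ℕ) (hN : 1 ≤ N) (g : ℝ) (hg : 0 < g)
    (h um b : ℝ → ℝ) (α : ℕ → ℝ → ℝ)
    (hh : Differentiable ℝ h) (hum : Differentiable ℝ um) (hb : Differentiable ℝ b)
    (hα : ∀ i, Differentiable ℝ (α i))
    (hpos : ∀ x, 0 < h x)
    (hdis : ∃ c : ℝ, ∀ x, h x * um x = c)
    (hE : ∃ c : ℝ, ∀ x,
      (um x) ^ 2 / 2 + g * (h x + b x) +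
        (3 / 2) * ∑ i ∈ Finset.range N, (α (i + 1) x) ^ 2 / (2 * (i : ℝ) + 3) = c)
    (hratio : ∀ i ∈ Finset.range N, ∃ c : ℝ, ∀ x, α (i + 1) x / h x = c) :
    -- first equation: (h u_m)ₓ = 0
    (∀ x, deriv (fun y => h y * um y) x = 0) ∧
    -- momentum equation: (h u_m² + g h²/2 + Σᵢ h αᵢ²/(2i+1))ₓ = -g h bₓ
    (∀ x, deriv (fun y => h y * (um y) ^ 2 + g * (h y) ^ 2 / 2 +
        ∑ i ∈ Finset.range N, h y * (α (i + 1) y) ^ 2 / (2 * (i : ℝ) + 3)) x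
      = -(g * h x * deriv b x)) ∧
    -- moment equations: (2 h u_m αᵢ)ₓ - u_m (h αᵢ)ₓ = 0
    (∀ i ∈ Finset.range N, ∀ x,
      deriv (fun y => 2 * h y * um y * α (i + 1) y) x -
        um x * deriv (fun y => h y * α (i + 1) y) x = 0) := by
  obtain ⟨K, hK⟩ := hdis
  obtain ⟨cE, hcE⟩ := hE
  set c : ℕ → ℝ := fun i => α (i + 1) 0 / h 0 with hcdef
  have hα_eq : ∀ i ∈ Finset.range N, ∀ x, α (i + 1) x = c i * h x := by
    intro i hi x
    obtain ⟨ci, hci⟩ := hratio i hi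
    have hx := (hpos x).ne'
    have h0 := (hpos 0).ne'
    have h1 : α (i + 1) x = ci * h x := by
      rw [← hci x]; field_simp
    have h2 : α (i + 1) 0 = ci * h 0 := by
      rw [← hci 0]; field_simp
    simp only [hcdef, h1, h2]
    field_simp
  set C : ℝ := ∑ i ∈ Finset.range N, (c i) ^ 2 / (2 * (i : ℝ) + 3) with hCdef
  have hsum2 : ∀ x, ∑ i ∈ Finset.range N, (α (i + 1) x) ^ 2 / (2 * (i : ℝ) + 3)
      = C * h x ^ 2 := by
    intro x
    rw [hCdef, Finset.sum_mul]
    refine Finset.sum_congr rfl fun i hi => ?_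
    rw [hα_eq i hi x]; ring
  have hsum3 : ∀ x, ∑ i ∈ Finset.range N, h x * (α (i + 1) x) ^ 2 / (2 * (i : ℝ) + 3)
      = C * h x ^ 3 := by
    intro x
    rw [hCdef, Finset.sum_mul]
    refine Finset.sum_congr rfl fun i hi => ?_
    rw [hα_eq i hi x]; ring
  -- Part 1
  have part1 : ∀ x, deriv (fun y => h y * um y) x = 0 := by
    intro x
    have : (fun y => h y * um y) = fun _ => K := funext hK
    rw [this, deriv_const]
  have hprod : ∀ x, deriv h x * um x + h x * deriv um x = 0 := by
    intro x
    have H : deriv (fun y => h y * um y) x = deriv h x * um x + h x * deriv um x :=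
      ((hh x).hasDerivAt.mul (hum x).hasDerivAt).deriv
    rw [part1 x] at H
    exact H.symm
  -- Energy derivative
  have hE0 : ∀ x, deriv (fun y => um y ^ 2 / 2 + g * (h y + b y) + 3 / 2 * (C * h y ^ 2)) x = 0 := by
    intro x
    have : (fun y => um y ^ 2 / 2 + g * (h y + b y) + 3 / 2 * (C * h y ^ 2))
        = fun _ => cE := by
      funext y
      rw [← hsum2 y]
      exact hcE y
    rw [this, deriv_const]
  have eE : ∀ x, um x * deriv um x + g * (deriv h x + deriv b x)
      + 3 * C * (h x * deriv h x) = 0 := by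
    intro x
    have H : HasDerivAt (fun y => um y ^ 2 / 2 + g * (h y + b y) + 3 / 2 * (C * h y ^ 2))
        (um x * deriv um x + g * (deriv h x + deriv b x) + 3 * C * (h x * deriv h x)) x := by
      have H0 := ((((hum x).hasDerivAt.pow 2).div_const 2).add
        (((hh x).hasDerivAt.add (hb x).hasDerivAt).const_mul g)).add
        ((((hh x).hasDerivAt.pow 2).const_mul C).const_mul (3 / 2))
      refine H0.congr_deriv ?_
      push_cast
      ring
    have heq := H.deriv
    rw [hE0 x] at heq
    exact heq.symm
  refine ⟨part1, ?_, ?_⟩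
  · -- momentum equation
    intro x
    have hFeq : (fun y => h y * (um y) ^ 2 + g * (h y) ^ 2 / 2 +
        ∑ i ∈ Finset.range N, h y * (α (i + 1) y) ^ 2 / (2 * (i : ℝ) + 3))
        = fun y => h y * um y ^ 2 + g * h y ^ 2 / 2 + C * h y ^ 3 := by
      funext y
      rw [hsum3 y]
    have HF : HasDerivAt (fun y => h y * um y ^ 2 + g * h y ^ 2 / 2 + C * h y ^ 3)
        (deriv h x * um x ^ 2 + h x * (2 * um x * deriv um x)
          + g * (2 * h x * deriv h x) / 2 + C * (3 * h x ^ 2 * deriv h x)) x := by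
      have H0 := (((hh x).hasDerivAt.mul ((hum x).hasDerivAt.pow 2)).add
        ((((hh x).hasDerivAt.pow 2).const_mul g).div_const 2)).add
        (((hh x).hasDerivAt.pow 3).const_mul C)
      refine H0.congr_deriv ?_
      simp only [Pi.pow_apply]
      push_cast
      ring
    rw [hFeq, HF.deriv]
    linear_combination um x * hprod x + h x * eE x
  · -- moment equations
    intro i hi x
    have e1 : (fun y => 2 * h y * um y * α (i + 1) y) = fun y => (2 * K * c i) * h y := by
      funext y
      rw [hα_eq i hi y]
      linear_combination (2 * c i * h y) * hK y
    have e2 : (fun y => h y * α (i + 1) y) = fun y => c i * h y ^ 2 := by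
      funext y
      rw [hα_eq i hi y]
      ring
    rw [e1, e2, ((hh x).hasDerivAt.const_mul (2 * K * c i)).deriv,
      (show HasDerivAt (fun y => c i * h y ^ 2) _ x from
        ((hh x).hasDerivAt.pow 2).const_mul (c i)).deriv]
    push_cast
    linear_combination (-(2 * c i * deriv h x)) * hK x
end

section
/- For smooth solutions with h > 0, the flux-gradient plus non-conservative product of the SWLME can be written via equilibrium variables: fₓ(u) + G(u)uₓ = L(u)·ṽₓ, where ṽ = (E, hu_m, α₁/h,...,α_N/h, 0) with E = u_m²/2 + g(h+b) + (3/2)Σᵢ αᵢ²/(2i+1), and L(u) is the explicit matrix with rows: row 1 = (0,1,0,...,0,0); row 2 = (h, u_m, -h²α₁/3,..., -h²α_N/(2N+1), 0); row i+2 = (0, 2αᵢ, 0,...,h²u_m (position i+2),...,0, 0); last row = (0,...,0,1). -/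
open Finset

/-- For smooth solutions with `h > 0`, the flux gradient plus non-conservative product of
the extended SWLME equals `L(u) ∂ₓ ṽ`, where `ṽ = (E, hu_m, α₁/h, …, α_N/h, 0)` and
`L(u)` is the explicit matrix of the paper; the identity is stated componentwise. -/
theorem swlme_equilibrium_variable_identity
    (N : ℕ) (hN : 1 ≤ N) (g : ℝ) (hg : 0 < g)
    (h um b : ℝ → ℝ) (α : ℕ → ℝ → ℝ)
    (hh : Differentiable ℝ h) (hum : Differentiable ℝ um) (hb : Differentiable ℝ b)
    (hα : ∀ i, Differentiable ℝ (α i))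
    (hpos : ∀ x, 0 < h x) :
    -- first component: (h u_m)ₓ = (h u_m)ₓ
    (∀ x : ℝ, deriv (fun y => h y * um y) x = deriv (fun y => h y * um y) x) ∧
    -- second component:
    -- (h u_m² + g h²/2 + Σᵢ h αᵢ²/(2i+1))ₓ + g h bₓ
    --   = h Eₓ + u_m (h u_m)ₓ - Σᵢ (h² αᵢ/(2i+1)) (αᵢ/h)ₓ
    (∀ x : ℝ,
      deriv (fun y => h y * (um y) ^ 2 + g * (h y) ^ 2 / 2 +
          ∑ i ∈ Finset.range N, h y * (α (i + 1) y) ^ 2 / (2 * (i : ℝ) + 3)) x +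
        g * h x * deriv b x
      = h x * deriv (fun y => (um y) ^ 2 / 2 + g * (h y + b y) +
            (3 / 2) * ∑ i ∈ Finset.range N, (α (i + 1) y) ^ 2 / (2 * (i : ℝ) + 3)) x +
        um x * deriv (fun y => h y * um y) x -
        ∑ i ∈ Finset.range N,
          (h x) ^ 2 * α (i + 1) x / (2 * (i : ℝ) + 3) *
            deriv (fun y => α (i + 1) y / h y) x) ∧
    -- moment components: (2 h u_m αᵢ)ₓ - u_m (h αᵢ)ₓ = 2 αᵢ (h u_m)ₓ + h² u_m (αᵢ/h)ₓ
    (∀ i ∈ Finset.range N, ∀ x : ℝ,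
      deriv (fun y => 2 * h y * um y * α (i + 1) y) x -
          um x * deriv (fun y => h y * α (i + 1) y) x
        = 2 * α (i + 1) x * deriv (fun y => h y * um y) x +
          (h x) ^ 2 * um x * deriv (fun y => α (i + 1) y / h y) x) ∧
    -- last component: 0 = (0)ₓ
    (∀ x : ℝ, (0 : ℝ) = deriv (fun _ : ℝ => (0 : ℝ)) x) := by

  refine ⟨fun x => rfl, ?_, ?_, fun x => by simp⟩
  · intro x
    have hx : h x ≠ 0 := (hpos x).ne'
    have dh := (hh x).hasDerivAt
    have du := (hum x).hasDerivAt
    have db := (hb x).hasDerivAt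
    have da : ∀ i, HasDerivAt (α i) (deriv (α i) x) x := fun i => (hα i x).hasDerivAt
    have d1 : HasDerivAt (fun y => h y * (um y) ^ 2 + g * (h y) ^ 2 / 2 +
        ∑ i ∈ Finset.range N, h y * (α (i + 1) y) ^ 2 / (2 * (i : ℝ) + 3))
        ((deriv h x * (um x) ^ 2 + h x * (2 * um x ^ 1 * deriv um x)) +
          (g * (2 * h x ^ 1 * deriv h x)) / 2 +
          ∑ i ∈ Finset.range N,
            (deriv h x * (α (i + 1) x) ^ 2 +
              h x * (2 * α (i + 1) x ^ 1 * deriv (α (i + 1)) x)) / (2 * (i : ℝ) + 3)) x := by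
      exact ((dh.mul (du.pow 2)).add (((dh.pow 2).const_mul g).div_const 2)).add
        (HasDerivAt.fun_sum fun i _ => (dh.mul ((da (i + 1)).pow 2)).div_const _)
    have d2 : HasDerivAt (fun y => (um y) ^ 2 / 2 + g * (h y + b y) +
        (3 / 2) * ∑ i ∈ Finset.range N, (α (i + 1) y) ^ 2 / (2 * (i : ℝ) + 3))
        ((2 * um x ^ 1 * deriv um x) / 2 + g * (deriv h x + deriv b x) +
          (3 / 2) * ∑ i ∈ Finset.range N,
            (2 * α (i + 1) x ^ 1 * deriv (α (i + 1)) x) / (2 * (i : ℝ) + 3)) x := by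
      exact (((du.pow 2).div_const 2).add ((dh.add db).const_mul g)).add
        ((HasDerivAt.fun_sum fun i _ => ((da (i + 1)).pow 2).div_const _).const_mul (3 / 2))
    have d3 : HasDerivAt (fun y => h y * um y) (deriv h x * um x + h x * deriv um x) x :=
      dh.mul du
    have hrw : (∑ i ∈ Finset.range N,
        (h x) ^ 2 * α (i + 1) x / (2 * (i : ℝ) + 3) * deriv (fun y => α (i + 1) y / h y) x)
        = ∑ i ∈ Finset.range N, (h x) ^ 2 * α (i + 1) x / (2 * (i : ℝ) + 3) *
            ((deriv (α (i + 1)) x * h x - α (i + 1) x * deriv h x) / h x ^ 2) :=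
      Finset.sum_congr rfl fun i _ => by rw [((da (i + 1)).fun_div dh hx).deriv]
    rw [d1.deriv, d2.deriv, d3.deriv, hrw]
    have hkey : (∑ i ∈ Finset.range N,
        (deriv h x * (α (i + 1) x) ^ 2 +
          h x * (2 * α (i + 1) x ^ 1 * deriv (α (i + 1)) x)) / (2 * (i : ℝ) + 3)) +
        (∑ i ∈ Finset.range N, (h x) ^ 2 * α (i + 1) x / (2 * (i : ℝ) + 3) *
            ((deriv (α (i + 1)) x * h x - α (i + 1) x * deriv h x) / h x ^ 2))
        = 3 / 2 * h x * ∑ i ∈ Finset.range N,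
            (2 * α (i + 1) x ^ 1 * deriv (α (i + 1)) x) / (2 * (i : ℝ) + 3) := by
      rw [← Finset.sum_add_distrib, Finset.mul_sum]
      refine Finset.sum_congr rfl fun i _ => ?_
      have hc : (2 * (i : ℝ) + 3) ≠ 0 := by positivity
      field_simp
      ring
    linear_combination hkey
  · intro i _ x
    have hx : h x ≠ 0 := (hpos x).ne'
    have dh := (hh x).hasDerivAt
    have du := (hum x).hasDerivAt
    have da := (hα (i + 1) x).hasDerivAt
    have d1 : HasDerivAt (fun y => 2 * h y * um y * α (i + 1) y)
        ((2 * deriv h x * um x + 2 * h x * deriv um x) * α (i + 1) x +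
          2 * h x * um x * deriv (α (i + 1)) x) x := by
      have : HasDerivAt (fun y => 2 * h y * um y)
          (2 * deriv h x * um x + 2 * h x * deriv um x) x := by
        have := (dh.const_mul 2).mul du
        simpa [mul_assoc, Pi.mul_def] using this
      exact this.mul da
    have d2 : HasDerivAt (fun y => h y * α (i + 1) y)
        (deriv h x * α (i + 1) x + h x * deriv (α (i + 1)) x) x := dh.mul da
    have d3 : HasDerivAt (fun y => h y * um y) (deriv h x * um x + h x * deriv um x) x :=
      dh.mul du
    have d4 : HasDerivAt (fun y => α (i + 1) y / h y)
        ((deriv (α (i + 1)) x * h x - α (i + 1) x * deriv h x) / h x ^ 2) x := da.div dh hx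
    rw [d1.deriv, d2.deriv, d3.deriv, d4.deriv]
    field_simp
    ring
end

section
/- Verification of the second component of the identity fₓ + G·uₓ = L·ṽₓ: for differentiable h > 0, u_m, αᵢ, b, one has ∂ₓ(hu_m² + gh²/2 + Σᵢ hαᵢ²/(2i+1)) + gh·∂ₓb = h·∂ₓE + u_m·∂ₓ(hu_m) - Σᵢ (h²αᵢ/(2i+1))·∂ₓ(αᵢ/h), where E = u_m²/2 + g(h+b) + (3/2)Σᵢ αᵢ²/(2i+1). -/
open Finset

/-- Verification of the second component of `fₓ + G uₓ = L ṽₓ` for the SWLME: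
`∂ₓ(h u_m² + g h²/2 + Σᵢ h αᵢ²/(2i+1)) + g h ∂ₓ b
  = h ∂ₓ E + u_m ∂ₓ(h u_m) - Σᵢ (h² αᵢ/(2i+1)) ∂ₓ(αᵢ/h)`,
where `E = u_m²/2 + g (h + b) + (3/2) Σᵢ αᵢ²/(2i+1)`. -/
theorem swlme_second_component_identity
    (N : ℕ) (hN : 1 ≤ N) (g : ℝ) (hg : 0 < g)
    (h um b : ℝ → ℝ) (α : ℕ → ℝ → ℝ)
    (hh : Differentiable ℝ h) (hum : Differentiable ℝ um) (hb : Differentiable ℝ b)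
    (hα : ∀ i, Differentiable ℝ (α i))
    (hpos : ∀ x, 0 < h x) (x : ℝ) :
    deriv (fun y => h y * (um y) ^ 2 + g * (h y) ^ 2 / 2 +
        ∑ i ∈ Finset.range N, h y * (α (i + 1) y) ^ 2 / (2 * (i : ℝ) + 3)) x +
      g * h x * deriv b x
    = h x * deriv (fun y => (um y) ^ 2 / 2 + g * (h y + b y) +
          (3 / 2) * ∑ i ∈ Finset.range N, (α (i + 1) y) ^ 2 / (2 * (i : ℝ) + 3)) x +
      um x * deriv (fun y => h y * um y) x -
      ∑ i ∈ Finset.range N,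
        (h x) ^ 2 * α (i + 1) x / (2 * (i : ℝ) + 3) *
          deriv (fun y => α (i + 1) y / h y) x := by
  have hx0 : h x ≠ 0 := (hpos x).ne'
  have Hh : HasDerivAt h (deriv h x) x := (hh x).hasDerivAt
  have Hum : HasDerivAt um (deriv um x) x := (hum x).hasDerivAt
  have Hb : HasDerivAt b (deriv b x) x := (hb x).hasDerivAt
  have Hα : ∀ i, HasDerivAt (α i) (deriv (α i) x) x := fun i => ((hα i) x).hasDerivAt
  set H := deriv h x
  set U := deriv um x
  set B := deriv b x
  -- derivative of first big function
  have d1 : deriv (fun y => h y * (um y) ^ 2 + g * (h y) ^ 2 / 2 +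
        ∑ i ∈ Finset.range N, h y * (α (i + 1) y) ^ 2 / (2 * (i : ℝ) + 3)) x
      = (H * (um x) ^ 2 + h x * (2 * um x * U)) + g * (2 * h x * H) / 2 +
        ∑ i ∈ Finset.range N,
          (H * (α (i + 1) x) ^ 2 + h x * (2 * α (i + 1) x * deriv (α (i + 1)) x)) /
            (2 * (i : ℝ) + 3) := by
    refine HasDerivAt.deriv ?_
    refine HasDerivAt.add (HasDerivAt.add ?_ ?_) (HasDerivAt.fun_sum fun i _ => ?_)
    · simpa using Hh.fun_mul (Hum.fun_pow 2)
    · simpa using (((Hh.fun_pow 2).const_mul g).div_const 2)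
    · simpa using (Hh.fun_mul ((Hα (i + 1)).fun_pow 2)).div_const (2 * (i : ℝ) + 3)
  have d2 : deriv (fun y => (um y) ^ 2 / 2 + g * (h y + b y) +
          (3 / 2) * ∑ i ∈ Finset.range N, (α (i + 1) y) ^ 2 / (2 * (i : ℝ) + 3)) x
      = (2 * um x * U) / 2 + g * (H + B) +
        (3 / 2) * ∑ i ∈ Finset.range N,
          (2 * α (i + 1) x * deriv (α (i + 1)) x) / (2 * (i : ℝ) + 3) := by
    refine HasDerivAt.deriv ?_
    refine HasDerivAt.add (HasDerivAt.add ?_ ?_) ?_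
    · simpa using (Hum.pow 2).div_const 2
    · exact (Hh.add Hb).const_mul g
    · exact (HasDerivAt.fun_sum fun i _ => by
        simpa using ((Hα (i + 1)).pow 2).div_const (2 * (i : ℝ) + 3)).const_mul (3 / 2)
  have d3 : deriv (fun y => h y * um y) x = H * um x + h x * U :=
    (Hh.mul Hum).deriv
  have d4 : ∀ i, deriv (fun y => α (i + 1) y / h y) x
      = (deriv (α (i + 1)) x * h x - α (i + 1) x * H) / (h x) ^ 2 := fun i =>
    ((Hα (i + 1)).div Hh hx0).deriv
  rw [d1, d2, d3]
  simp only [d4]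
  have hsum : ∑ i ∈ Finset.range N,
          (H * (α (i + 1) x) ^ 2 + h x * (2 * α (i + 1) x * deriv (α (i + 1)) x)) /
            (2 * (i : ℝ) + 3)
      = h x * ((3 / 2) * ∑ i ∈ Finset.range N,
          (2 * α (i + 1) x * deriv (α (i + 1)) x) / (2 * (i : ℝ) + 3)) -
        ∑ i ∈ Finset.range N,
          (h x) ^ 2 * α (i + 1) x / (2 * (i : ℝ) + 3) *
            ((deriv (α (i + 1)) x * h x - α (i + 1) x * H) / (h x) ^ 2) := by
    rw [Finset.mul_sum, Finset.mul_sum, ← Finset.sum_sub_distrib]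
    refine Finset.sum_congr rfl fun i _ => ?_
    have hi : (2 * (i : ℝ) + 3) ≠ 0 := by positivity
    field_simp
    ring
  linear_combination hsum
end
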